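/- For p odd and s an invertible Niho exponent over L, W_{L,s}(1) ≥ p^n; moreover if p^n ≡ 2 (mod 3) then W_{L,s}(1) ≥ 3p^n. -/

import Mathlib

open scoped BigOperators

open Finset


open Finset

lemma cyc_exists_orderOf_eq {G : Type*} [Group G] [Fintype G] [IsCyclic G] {d : ℕ}
    (hd : d ∣ Fintype.card G) : ∃ g : G, orderOf g = d := by
  obtain ⟨g, hg⟩ := IsCyclic.exists_generator (α := G)
  have hord : orderOf g = Fintype.card G := by
    rw [orderOf_eq_card_of_forall_mem_zpowers hg, Nat.card_eq_fintype_card]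
  have hc0 : Fintype.card G ≠ 0 := Fintype.card_ne_zero
  refine ⟨g ^ (Fintype.card G / d), ?_⟩
  rw [orderOf_pow, hord, Nat.gcd_eq_right (Nat.div_dvd_of_dvd hd), Nat.div_div_self hd hc0]

lemma cyc_pow_surj {G : Type*} [Group G] [Fintype G] [IsCyclic G] (a b : ℕ) (hb : b ≠ 0)
    (hcard : Fintype.card G = a * b) (u : G) (hu : u ^ b = 1) : ∃ x : G, x ^ a = u := by
  obtain ⟨g, hg⟩ := IsCyclic.exists_generator (α := G)
  have hord : orderOf g = a * b := by
    rw [orderOf_eq_card_of_forall_mem_zpowers hg, Nat.card_eq_fintype_card, hcard]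
  obtain ⟨t, rfl⟩ := hg u
  have h1 : ((a : ℤ) * b) ∣ t * b := by
    have h : ((g ^ t) ^ (b : ℤ)) = 1 := by rw [← zpow_natCast] at hu; exact hu
    rw [← zpow_mul] at h
    have h2 := orderOf_dvd_iff_zpow_eq_one.mpr h
    rwa [hord, Nat.cast_mul] at h2
  have h2 : (a : ℤ) ∣ t := by
    have hb' : (b : ℤ) ≠ 0 := Int.natCast_ne_zero.mpr hb
    exact (mul_dvd_mul_iff_right hb').mp h1
  obtain ⟨t', rfl⟩ := h2
  exact ⟨g ^ t', by rw [← zpow_natCast, ← zpow_mul, mul_comm]⟩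

lemma card_fixed_field (L : Type) [Field L] [Fintype L] [DecidableEq L] (q : ℕ) (hq : 2 ≤ q)
    (hdvd : q - 1 ∣ Fintype.card L - 1) :
    #(univ.filter fun l : L => l ^ q = l) = q := by
  set d := q - 1 with hd
  have hd0 : d ≠ 0 := by omega
  have hdpos : 0 < d := by omega
  have hq' : q = d + 1 := by omega
  obtain ⟨ζ, hζ⟩ : ∃ g : Lˣ, orderOf g = d := by
    apply cyc_exists_orderOf_eq
    rwa [Fintype.card_units]
  have hprim : IsPrimitiveRoot (ζ : L) d := by
    have := IsPrimitiveRoot.orderOf (ζ : L)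
    rwa [orderOf_units, hζ] at this
  have hcard : #(Polynomial.nthRootsFinset d (1 : L)) = d := hprim.card_nthRootsFinset
  have hset : (univ.filter fun l : L => l ^ q = l) =
      insert (0 : L) (Polynomial.nthRootsFinset d (1 : L)) := by
    ext l
    simp only [mem_filter, mem_univ, true_and, mem_insert,
      Polynomial.mem_nthRootsFinset hdpos]
    constructor
    · intro h
      rcases eq_or_ne l 0 with rfl | hl
      · exact Or.inl rfl
      · refine Or.inr ?_
        have h2 : l ^ d * l = 1 * l := by
          rw [one_mul, ← pow_succ, ← hq', h]
        exact mul_right_cancel₀ hl h2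
    · rintro (rfl | h)
      · rw [zero_pow (by omega)]
      · rw [hq', pow_succ, h, one_mul]
  rw [hset, card_insert_of_notMem, hcard]
  · omega
  · intro h0
    have := (Polynomial.mem_nthRootsFinset hdpos (1 : L)).mp h0
    rw [zero_pow hd0] at this
    exact zero_ne_one this

lemma trace_frob (p : ℕ) [Fact p.Prime] (L : Type) [Field L] [Fintype L]
    [Algebra (ZMod p) L] (y : L) :
    Algebra.trace (ZMod p) L (y ^ p) = Algebra.trace (ZMod p) L y := by
  haveI : CharP L p := charP_of_injective_algebraMap (algebraMap (ZMod p) L).injective p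
  let f : L →ₐ[ZMod p] L :=
    { toRingHom := frobenius L p
      commutes' := fun r => by
        show frobenius L p (algebraMap (ZMod p) L r) = algebraMap (ZMod p) L r
        rw [frobenius_def, ← map_pow, ZMod.pow_card] }
  have hbij : Function.Bijective f :=
    (Finite.injective_iff_bijective).mp (RingHom.injective (frobenius L p))
  let e : L ≃ₐ[ZMod p] L := AlgEquiv.ofBijective f hbij
  have := Algebra.trace_eq_of_algEquiv e y
  simpa [e, f, AlgEquiv.ofBijective, frobenius_def] using this

lemma trace_frob_pow (p : ℕ) [Fact p.Prime] (L : Type) [Field L] [Fintype L]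
    [Algebra (ZMod p) L] (m : ℕ) (y : L) :
    Algebra.trace (ZMod p) L (y ^ p ^ m) = Algebra.trace (ZMod p) L y := by
  induction m with
  | zero => simp
  | succ m ih => rw [pow_succ, pow_mul, trace_frob, ih]

lemma char_sum_dichotomy {L : Type} [Field L] [DecidableEq L] (ψ : L → ℂ)
    (hadd : ∀ a b, ψ (a + b) = ψ a * ψ b) (A : Finset L)
    (hAadd : ∀ a ∈ A, ∀ b ∈ A, a + b ∈ A) (hAsub : ∀ a ∈ A, ∀ b ∈ A, a - b ∈ A) (c : L) :
    ∃ t : ℕ, (∑ l ∈ A, ψ (l * c)) = t ∧ ((∀ l ∈ A, ψ (l * c) = 1) → t = #A) := by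
  by_cases hall : ∀ l ∈ A, ψ (l * c) = 1
  · refine ⟨#A, ?_, fun _ => rfl⟩
    rw [Finset.sum_congr rfl hall, Finset.sum_const, nsmul_eq_mul, mul_one]
  · push_neg at hall
    obtain ⟨l₀, hl₀A, hl₀⟩ := hall
    refine ⟨0, ?_, fun h => absurd (h l₀ hl₀A) hl₀⟩
    have hre : (∑ l ∈ A, ψ (l * c)) = ψ (l₀ * c) * ∑ l ∈ A, ψ (l * c) := by
      rw [Finset.mul_sum]
      refine Finset.sum_nbij' (i := fun l => l - l₀) (j := fun l => l + l₀) ?_ ?_ ?_ ?_ ?_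
      · intro a ha; exact hAsub a ha l₀ hl₀A
      · intro a ha; exact hAadd a ha l₀ hl₀A
      · intro a _; ring
      · intro a _; ring
      · intro a ha
        rw [← hadd]
        congr 1
        ring
    have h0 : (ψ (l₀ * c) - 1) * ∑ l ∈ A, ψ (l * c) = 0 := by
      rw [sub_mul, one_mul, ← hre, sub_self]
    rcases mul_eq_zero.mp h0 with h | h
    · exact absurd (sub_eq_zero.mp h) hl₀
    · rw [h]; norm_num


/-- The Weil sum `W_{F,s}(a) = ∑_{x ∈ F} μ(x^s - a x)`, where `μ` is the canonical
additive character `μ(x) = ζ_p^{Tr_{F/𝔽_p}(x)}` of the finite field `F`. -/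
noncomputable def weilSum (p : ℕ) (F : Type) [Field F] [Fintype F]
    [Algebra (ZMod p) F] (s : ℕ) (a : F) : ℂ :=
  ∑ x : F, Complex.exp (2 * Real.pi * Complex.I *
    ((Algebra.trace (ZMod p) F (x ^ s - a * x)).val : ℂ) / (p : ℂ))

/-- for `p` odd and `s` an invertible Niho exponent over `L`,
`W_{L,s}(1) ≥ p^n`; moreover if `p^n ≡ 2 (mod 3)` then `W_{L,s}(1) ≥ 3p^n`. -/
theorem weil_sum_at_one_lower_bound (p n : ℕ) [Fact p.Prime] (hn : 0 < n)
    (F L : Type) [Field F] [Fintype F] [Field L] [Fintype L]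
    [Algebra (ZMod p) L] [Algebra F L]
    (hF : Fintype.card F = p ^ n) (hL : Fintype.card L = p ^ (2 * n))
    (k s : ℕ) (hsk : s = 1 + k * (p ^ n - 1)) (hs : Nat.Coprime s (p ^ (2 * n) - 1))
    (hp : Odd p) :
    ∃ m : ℤ, weilSum p L s 1 = (m : ℂ) ∧ (p : ℤ) ^ n ≤ m ∧
      (p ^ n % 3 = 2 → 3 * (p : ℤ) ^ n ≤ m) := by
  classical
  have hp2 : 2 ≤ p := (Fact.out : p.Prime).two_le
  have hp3 : 3 ≤ p := by rcases hp with ⟨j, hj⟩; omega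
  set q : ℕ := p ^ n with hqdef
  have hqp : p ≤ q := Nat.le_self_pow (by omega) p
  have hq3 : 3 ≤ q := le_trans hp3 hqp
  haveI : NeZero p := ⟨by omega⟩
  haveI : Fact (2 < p) := ⟨by omega⟩
  haveI hchar : CharP L p := charP_of_injective_algebraMap (algebraMap (ZMod p) L).injective p
  have hcardL : Fintype.card L = q ^ 2 := by rw [hL, hqdef, ← pow_mul, mul_comm 2 n]
  have hq21 : q ^ 2 - 1 = (q - 1) * (q + 1) := by
    have h1 : 1 ≤ q := by omega
    have h2 : 1 ≤ q ^ 2 := Nat.one_le_pow _ _ (by omega)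
    zify [h1, h2]
    ring
  have hcardU : Fintype.card Lˣ = q ^ 2 - 1 := by rw [Fintype.card_units, hcardL]
  have hqodd : Odd q := hp.pow
  have hs0 : s ≠ 0 := by omega
  -- the additive character
  set tr : L → ZMod p := fun y => Algebra.trace (ZMod p) L y with htr
  set ψ : L → ℂ := fun y => ZMod.stdAddChar (tr y) with hψdef
  have hψ_add : ∀ a b : L, ψ (a + b) = ψ a * ψ b := fun a b => by
    simp only [hψdef, htr, map_add]
    exact AddChar.map_add_eq_mul _ _ _
  have hψ0 : ψ 0 = 1 := by
    simp only [hψdef, htr, map_zero]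
    exact AddChar.map_zero_eq_one _
  have hψq : ∀ y : L, ψ (y ^ q - y) = 1 := fun y => by
    have h1 : tr (y ^ q - y) = 0 := by
      simp only [htr, map_sub, hqdef]
      rw [trace_frob_pow p L n y, sub_self]
    simp only [hψdef, h1]
    exact AddChar.map_zero_eq_one _
  have hW : weilSum p L s 1 = ∑ x : L, ψ (x ^ s - x) := by
    unfold weilSum
    refine Finset.sum_congr rfl fun x _ => ?_
    rw [one_mul]
    show _ = ZMod.stdAddChar (tr (x ^ s - x))
    rw [ZMod.stdAddChar_apply, ZMod.toCircle_apply, htr]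
  -- the subfield of size q, as a finset
  set A : Finset L := univ.filter (fun l => l ^ q = l) with hAdef
  have hA0 : (0 : L) ∈ A := by
    simp only [hAdef, mem_filter, mem_univ, true_and]
    rw [zero_pow (by omega : q ≠ 0)]
  have hAcard : #A = q := by
    apply card_fixed_field L q (by omega)
    rw [hcardL, hq21]
    exact ⟨q + 1, rfl⟩
  have hAmem : ∀ l : L, l ∈ A ↔ l ^ q = l := fun l => by
    simp only [hAdef, mem_filter, mem_univ, true_and]
  have hAadd : ∀ a ∈ A, ∀ b ∈ A, a + b ∈ A := by
    intro a ha b hb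
    rw [hAmem] at *
    rw [hqdef, add_pow_char_pow, ← hqdef, ha, hb]
  have hAsub : ∀ a ∈ A, ∀ b ∈ A, a - b ∈ A := by
    intro a ha b hb
    rw [hAmem] at *
    rw [hqdef, sub_pow_char_pow, ← hqdef, ha, hb]
  -- relating the two descriptions of nonzero elements of A
  have hlq : ∀ l : L, l ≠ 0 → (l ^ (q - 1) = 1 ↔ l ^ q = l) := by
    intro l hl
    have hq' : q - 1 + 1 = q := by omega
    constructor
    · intro h; rw [← hq', pow_succ, h, one_mul]
    · intro h
      have h2 : l ^ (q - 1) * l = 1 * l := by rw [one_mul, ← pow_succ, hq', h]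
      exact mul_right_cancel₀ hl h2
  -- the circle group and fibers
  set SS : Finset L := univ.filter (fun u => u ^ (q + 1) = 1) with hSSdef
  set Φ : L → Finset L := fun u => (univ.erase 0).filter (fun x => x ^ (q - 1) = u) with hΦdef
  have fiber : ∀ u : L, ∃ t : ℕ,
      u ∈ SS → (∑ x ∈ Φ u, ψ (x ^ s - x)) = (t : ℂ) - 1 ∧ ((u ^ k = 1 ∨ u ^ k = u) → t = q) := by
    intro u
    by_cases huS : u ∈ SS
    · have hu1 : u ^ (q + 1) = 1 := by simpa [hSSdef] using huS
      have hu0 : u ≠ 0 := by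
        rintro rfl
        rw [zero_pow (by omega : q + 1 ≠ 0)] at hu1
        exact zero_ne_one hu1
      obtain ⟨xu, hxu⟩ : ∃ x : Lˣ, x ^ (q - 1) = Units.mk0 u hu0 := by
        apply cyc_pow_surj (q - 1) (q + 1) (by omega) (by rw [hcardU, hq21])
        apply Units.ext
        rw [Units.val_pow_eq_pow_val]
        simpa using hu1
      set x₀ : L := (xu : L) with hx₀def
      have hx₀0 : x₀ ≠ 0 := xu.ne_zero
      have hx₀u : x₀ ^ (q - 1) = u := by
        rw [hx₀def, ← Units.val_pow_eq_pow_val, hxu, Units.val_mk0]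
      set c : L := x₀ * u ^ k - x₀ with hcdef
      have hreidx : (∑ x ∈ Φ u, ψ (x ^ s - x)) = ∑ l ∈ A.erase 0, ψ (l * c) := by
        refine Finset.sum_nbij' (i := fun x => x * x₀⁻¹) (j := fun l => x₀ * l) ?_ ?_ ?_ ?_ ?_
        · intro x hx
          simp only [hΦdef, mem_filter, mem_erase, mem_univ, and_true, true_and] at hx
          obtain ⟨hx0, hxq⟩ := hx
          rw [mem_erase, hAmem]
          constructor
          · exact mul_ne_zero hx0 (inv_ne_zero hx₀0)
          · rw [← hlq _ (mul_ne_zero hx0 (inv_ne_zero hx₀0))]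
            rw [mul_pow, inv_pow, hxq, hx₀u, mul_inv_cancel₀ hu0]
        · intro l hl
          rw [mem_erase, hAmem] at hl
          obtain ⟨hl0, hlq'⟩ := hl
          simp only [hΦdef, mem_filter, mem_erase, mem_univ, and_true, true_and]
          constructor
          · exact mul_ne_zero hx₀0 hl0
          · rw [mul_pow, hx₀u, (hlq l hl0).mpr hlq', mul_one]
        · intro x hx
          field_simp
        · intro l hl
          field_simp
        · intro x hx
          simp only [hΦdef, mem_filter, mem_erase, mem_univ, and_true, true_and] at hx
          obtain ⟨hx0, hxq⟩ := hx
          congr 1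
          have hxs : x ^ s = x * u ^ k := by
            rw [hsk, pow_add, pow_one, mul_comm k (q - 1), pow_mul, hxq]
          rw [hxs, hcdef]
          field_simp
      obtain ⟨t, ht1, ht2⟩ := char_sum_dichotomy ψ hψ_add A hAadd hAsub c
      refine ⟨t, fun _ => ⟨?_, ?_⟩⟩
      · rw [hreidx, Finset.sum_erase_eq_sub hA0, ht1, zero_mul, hψ0]
      · intro hcond
        rw [← hAcard]
        apply ht2
        intro l hl
        rcases hcond with h1 | h2
        · rw [hcdef, h1, mul_one, sub_self, mul_zero, hψ0]
        · have hc' : c = x₀ ^ q - x₀ := by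
            rw [hcdef, h2]
            congr 1
            rw [← hx₀u, ← pow_succ']
            congr 1
            omega
          rw [hAmem] at hl
          have : l * c = (l * x₀) ^ q - l * x₀ := by
            rw [hc', mul_pow, hl, mul_sub]
          rw [this]
          exact hψq (l * x₀)
    · exact ⟨0, fun h => absurd h huS⟩
  choose t ht using fiber
  have hpq2 : p ^ (2 * n) = q ^ 2 := by rw [hqdef, ← pow_mul, mul_comm]
  have hsplit : (∑ x : L, ψ (x ^ s - x)) = 1 + ∑ x ∈ univ.erase 0, ψ (x ^ s - x) := by
    rw [← Finset.add_sum_erase univ _ (mem_univ (0 : L))]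
    congr 1
    rw [zero_pow hs0, sub_zero, hψ0]
  have hfib : (∑ x ∈ univ.erase 0, ψ (x ^ s - x)) = ∑ u ∈ SS, ∑ x ∈ Φ u, ψ (x ^ s - x) := by
    rw [hΦdef]
    refine (Finset.sum_fiberwise_of_maps_to (fun x hx => ?_) _).symm
    have hx0 : x ≠ 0 := (Finset.mem_erase.mp hx).1
    simp only [hSSdef, mem_filter, mem_univ, true_and]
    rw [← pow_mul, ← hq21, ← hcardL]
    exact FiniteField.pow_card_sub_one_eq_one x hx0
  have hsum2 : (∑ u ∈ SS, ∑ x ∈ Φ u, ψ (x ^ s - x)) = (∑ u ∈ SS, (t u : ℂ)) - #SS := by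
    rw [Finset.sum_congr rfl (fun u hu => ((ht u) hu).1)]
    rw [Finset.sum_sub_distrib, Finset.sum_const, nsmul_eq_mul, mul_one]
  have hSScard : #SS ≤ q + 1 := by
    have hsub : SS ⊆ (Polynomial.nthRoots (q + 1) (1 : L)).toFinset := by
      intro u hu
      rw [Multiset.mem_toFinset, Polynomial.mem_nthRoots (by omega : 0 < q + 1)]
      simpa [hSSdef] using hu
    refine le_trans (Finset.card_le_card hsub) (le_trans (Multiset.toFinset_card_le _) ?_)
    simpa using Polynomial.card_nthRoots (q + 1) (1 : L)
  have hmem1 : (1 : L) ∈ SS := by simp [hSSdef]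
  have hmemneg1 : (-1 : L) ∈ SS := by
    simp only [hSSdef, mem_filter, mem_univ, true_and]
    apply Even.neg_one_pow
    rcases hqodd with ⟨j, hj⟩
    exact ⟨j + 1, by omega⟩
  have hne11 : (1 : L) ≠ -1 := fun h => CharP.neg_one_ne_one L p h.symm
  have ht1q : t 1 = q := ((ht 1) hmem1).2 (Or.inl (one_pow k))
  have htm1q : t (-1) = q := by
    refine ((ht (-1)) hmemneg1).2 ?_
    rcases Nat.even_or_odd k with he | ho
    · exact Or.inl he.neg_one_pow
    · exact Or.inr ho.neg_one_pow
  have hcast : (∑ u ∈ SS, (t u : ℤ)) = ((∑ u ∈ SS, t u : ℕ) : ℤ) := by push_cast; rfl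
  have h1cast : ((q : ℕ) : ℤ) = (p : ℤ) ^ n := by rw [hqdef]; push_cast; rfl
  have hbound2 : 2 * q ≤ ∑ u ∈ SS, t u := by
    have hG : ({1, -1} : Finset L) ⊆ SS := by
      intro u hu
      rcases Finset.mem_insert.mp hu with rfl | hu
      · exact hmem1
      · rw [Finset.mem_singleton.mp hu]; exact hmemneg1
    have hsumG : ∑ u ∈ ({1, -1} : Finset L), t u = 2 * q := by
      rw [Finset.sum_insert (by simpa using hne11), Finset.sum_singleton, ht1q, htm1q]
      ring
    calc 2 * q = _ := hsumG.symm
    _ ≤ _ := Finset.sum_le_sum_of_subset hG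
  refine ⟨1 + (∑ u ∈ SS, (t u : ℤ)) - #SS, ?_, ?_, ?_⟩
  · rw [hW, hsplit, hfib, hsum2]
    push_cast
    ring
  · rw [hcast, ← h1cast]
    omega
  · intro h3
    have h3q : q % 3 = 2 := h3
    have hk3 : k % 3 ≠ 2 := by
      intro hk
      obtain ⟨a, ha⟩ : ∃ a, k = 3 * a + 2 := ⟨k / 3, by omega⟩
      obtain ⟨b, hb⟩ : ∃ b, q = 3 * b + 2 := ⟨q / 3, by omega⟩
      have hq1 : q - 1 = 3 * b + 1 := by omega
      have hsdvd : 3 ∣ s := by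
        refine ⟨3 * a * b + a + 2 * b + 1, ?_⟩
        rw [hsk, hq1, ha]
        ring
      have hqdvd : 3 ∣ q ^ 2 - 1 := by
        have h2 : q ^ 2 = 9 * b ^ 2 + 12 * b + 4 := by rw [hb]; ring
        omega
      have hs' : Nat.Coprime s (q ^ 2 - 1) := by rwa [hpq2] at hs
      have h31 : (3 : ℕ) ∣ 1 := by
        have := Nat.dvd_gcd hsdvd hqdvd
        rwa [hs'.gcd_eq_one] at this
      omega
    have h3dvd : 3 ∣ q + 1 := by omega
    obtain ⟨ζ, hζ⟩ : ∃ g : Lˣ, orderOf g = 3 := by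
      apply cyc_exists_orderOf_eq
      rw [hcardU, hq21]
      exact Dvd.dvd.mul_left h3dvd (q - 1)
    set ω : L := (ζ : L) with hωdef
    have hω3 : ω ^ 3 = 1 := by
      rw [hωdef, ← Units.val_pow_eq_pow_val, ← hζ, pow_orderOf_eq_one, Units.val_one]
    have hω1 : ω ≠ 1 := by
      intro h
      have hz : ζ = 1 := Units.ext (by rw [← hωdef, h, Units.val_one])
      rw [hz, orderOf_one] at hζ
      omega
    have hω0 : ω ≠ 0 := by
      intro h
      rw [h, zero_pow (by omega : (3 : ℕ) ≠ 0)] at hω3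
      exact zero_ne_one hω3
    have hω2ne1 : ω ^ 2 ≠ 1 := by
      intro h
      apply hω1
      have h2 : ω ^ 3 = ω := by rw [pow_succ, h, one_mul]
      rw [hω3] at h2
      exact h2.symm
    have hωnen1 : ω ≠ -1 := by
      intro h
      apply hω2ne1
      rw [h]
      ring
    have hω2nen1 : ω ^ 2 ≠ -1 := by
      intro h
      apply hω1
      have h4 : ω ^ 4 = 1 := by
        rw [(show (4 : ℕ) = 2 * 2 from rfl), pow_mul, h]
        ring
      have h4' : ω ^ 4 = ω := by
        rw [(show (4 : ℕ) = 3 + 1 from rfl), pow_add, hω3, one_mul, pow_one]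
      rw [h4'] at h4
      exact h4
    have hω2neω : ω ^ 2 ≠ ω := by
      intro h
      apply hω1
      have h2 : ω * ω = 1 * ω := by rw [one_mul, ← pow_two, h]
      exact mul_right_cancel₀ hω0 h2
    obtain ⟨cc, hcc⟩ := h3dvd
    have hmemω : ω ∈ SS := by
      simp only [hSSdef, mem_filter, mem_univ, true_and]
      rw [hcc, pow_mul, hω3, one_pow]
    have hmemω2 : ω ^ 2 ∈ SS := by
      simp only [hSSdef, mem_filter, mem_univ, true_and]
      rw [← pow_mul, mul_comm, pow_mul, hcc, pow_mul, hω3, one_pow, one_pow]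
    have hcondω : ω ^ k = 1 ∨ ω ^ k = ω := by
      have hk : k % 3 = 0 ∨ k % 3 = 1 := by omega
      rcases hk with hk | hk
      · left
        obtain ⟨a, ha⟩ : ∃ a, k = 3 * a := ⟨k / 3, by omega⟩
        rw [ha, pow_mul, hω3, one_pow]
      · right
        obtain ⟨a, ha⟩ : ∃ a, k = 3 * a + 1 := ⟨k / 3, by omega⟩
        rw [ha, pow_add, pow_mul, hω3, one_pow, one_mul, pow_one]
    have hcondω2 : (ω ^ 2) ^ k = 1 ∨ (ω ^ 2) ^ k = ω ^ 2 := by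
      rcases hcondω with h | h
      · left
        rw [← pow_mul, mul_comm, pow_mul, h, one_pow]
      · right
        rw [← pow_mul, mul_comm, pow_mul, h]
    have htωq : t ω = q := ((ht ω) hmemω).2 hcondω
    have htω2q : t (ω ^ 2) = q := ((ht (ω ^ 2)) hmemω2).2 hcondω2
    have hG4 : ({1, -1, ω, ω ^ 2} : Finset L) ⊆ SS := by
      intro u hu
      simp only [Finset.mem_insert, Finset.mem_singleton] at hu
      rcases hu with rfl | rfl | rfl | rfl
      · exact hmem1
      · exact hmemneg1
      · exact hmemω
      · exact hmemω2
    have hsumG4 : ∑ u ∈ ({1, -1, ω, ω ^ 2} : Finset L), t u = 4 * q := by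
      rw [Finset.sum_insert (by simp [hne11, Ne.symm hω1, Ne.symm hω2ne1]),
        Finset.sum_insert (by simp [Ne.symm hωnen1, Ne.symm hω2nen1]),
        Finset.sum_insert (by simp [Ne.symm hω2neω]),
        Finset.sum_singleton, ht1q, htm1q, htωq, htω2q]
      ring
    have hbound4 : 4 * q ≤ ∑ u ∈ SS, t u := hsumG4 ▸ Finset.sum_le_sum_of_subset hG4
    rw [hcast, ← h1cast]
    omega
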